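/- The complement of a disjoint union of cycles C_{ℓ₁}, …, C_{ℓ_m} (each ℓ_i ≥ 3) is 1-integrable with smallest eigenvalue at least -3: explicitly, assigning to vertex x_{i,p} the vector 𝐞 + 𝐞_{i,p} - 𝐞_{i,p+1} (indices mod ℓ_i), where {𝐞, 𝐞_{i,p}} is an orthonormal set of integral vectors, gives vectors of squared norm 3 with pairwise inner product 1 on edges and 0 on non-edges of the complement graph. -/

import Mathlib

open Finset Matrix SimpleGraph

lemma adjMatrix_isHermitian {V : Type*} [Fintype V] [DecidableEq V] (G : SimpleGraph V)
    [DecidableRel G.Adj] : (G.adjMatrix ℝ).IsHermitian := by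
  rw [Matrix.IsHermitian, Matrix.conjTranspose]
  show _ = _
  ext i j
  simp [SimpleGraph.adjMatrix, Matrix.transpose_apply, SimpleGraph.adj_comm]

/-- The smallest eigenvalue of (the adjacency matrix of) a finite simple graph. -/
noncomputable def minEig {V : Type*} [Fintype V] [DecidableEq V] (G : SimpleGraph V) : ℝ :=
  letI := Classical.decRel G.Adj
  ⨅ i, (adjMatrix_isHermitian G).eigenvalues i

lemma kronSum {α : Type*} [Fintype α] [DecidableEq α] (a b : α) :
    ∑ j, (if j = a then (1:ℤ) else 0) * (if j = b then 1 else 0) = if a = b then 1 else 0 := by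
  rw [Finset.sum_eq_single a (fun c _ hc => by simp [hc]) (by simp)]
  simp


lemma succ_mod_eq {n p : ℕ} (hp : p < n) :
    (p + 1) % n = p + 1 ∨ ((p + 1) % n = 0 ∧ p + 1 = n) := by
  rcases Nat.lt_or_ge (p + 1) n with h | h
  · exact Or.inl (Nat.mod_eq_of_lt h)
  · have h2 : p + 1 = n := by omega
    exact Or.inr ⟨by rw [h2, Nat.mod_self], h2⟩

theorem complement_of_disjoint_cycles_one_integrable
    (m : ℕ) (hm : 0 < m) (ℓ : Fin m → ℕ) (hℓ : ∀ i, 3 ≤ ℓ i)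
    (G : SimpleGraph (Σ i : Fin m, Fin (ℓ i)))
    (hG : ∀ x y : Σ i : Fin m, Fin (ℓ i), G.Adj x y ↔ x ≠ y ∧
      ¬ (x.1 = y.1 ∧ ((x.2.val + 1) % ℓ x.1 = y.2.val ∨ (y.2.val + 1) % ℓ y.1 = x.2.val)))
    (nxt : (Σ i : Fin m, Fin (ℓ i)) → (Σ i : Fin m, Fin (ℓ i)))
    (hnxt : ∀ x, (nxt x).1 = x.1 ∧ ((nxt x).2.val = (x.2.val + 1) % ℓ x.1)) :
    let f : (Σ i : Fin m, Fin (ℓ i)) → (Unit ⊕ Σ i : Fin m, Fin (ℓ i)) → ℤ :=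
      fun x j => (if j = Sum.inl () then 1 else 0) + (if j = Sum.inr x then 1 else 0)
        - (if j = Sum.inr (nxt x) then 1 else 0)
    (∀ x, ∑ j, f x j * f x j = 3) ∧
    (∀ x y, G.Adj x y → ∑ j, f x j * f y j = 1) ∧
    (∀ x y, x ≠ y → ¬ G.Adj x y → ∑ j, f x j * f y j = 0) ∧
    (-3 : ℝ) ≤ minEig G := by
  intro f
  have sigma_eq : ∀ x y : (Σ i : Fin m, Fin (ℓ i)), x.1 = y.1 → (x.2 : ℕ) = (y.2 : ℕ) → x = y := by
    rintro ⟨i, p⟩ ⟨j, q⟩ h1 h2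
    cases h1
    exact congrArg (Sigma.mk i) (Fin.ext h2)
  have hne : ∀ x, nxt x ≠ x := by
    intro x h
    have h2 : ((nxt x).2 : ℕ) = (x.2 : ℕ) :=
      congrArg (fun z : (Σ i : Fin m, Fin (ℓ i)) => (z.2 : ℕ)) h
    have h1 : (x.2 : ℕ) = ((x.2 : ℕ) + 1) % ℓ x.1 := h2.symm.trans (hnxt x).2
    have h3 : (x.2 : ℕ) < ℓ x.1 := x.2.isLt
    have h4 := hℓ x.1
    rcases succ_mod_eq h3 with h5 | ⟨h5, h6⟩ <;> omega
  have hinj : ∀ x y, nxt x = nxt y → x = y := by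
    intro x y h
    have h1 : x.1 = y.1 := by
      rw [← (hnxt x).1, ← (hnxt y).1, h]
    have h2 := congrArg (fun z : (Σ i : Fin m, Fin (ℓ i)) => (z.2 : ℕ)) h
    rw [(hnxt x).2, (hnxt y).2] at h2
    refine sigma_eq x y h1 ?_
    have h3 : (x.2 : ℕ) < ℓ x.1 := x.2.isLt
    have h4 : (y.2 : ℕ) < ℓ y.1 := y.2.isLt
    have hLeq : ℓ x.1 = ℓ y.1 := congrArg ℓ h1
    rcases succ_mod_eq h3 with h5 | ⟨h5, h6⟩ <;>
      rcases succ_mod_eq h4 with h7 | ⟨h7, h8⟩ <;> omega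
  have key : ∀ x y, ∑ j, f x j * f y j =
      1 + (if x = y then (1:ℤ) else 0) - (if x = nxt y then 1 else 0)
        - (if nxt x = y then 1 else 0) + (if nxt x = nxt y then 1 else 0) := by
    intro x y
    have hf : ∀ (z : Σ i : Fin m, Fin (ℓ i)) (w : Σ i : Fin m, Fin (ℓ i)),
        f z (Sum.inr w) = (if w = z then (1:ℤ) else 0) - (if w = nxt z then 1 else 0) := by
      intro z w; simp [f]
    have h2 : ∀ z, f x (Sum.inr z) * f y (Sum.inr z) =
        (if z = x then (1:ℤ) else 0) * (if z = y then 1 else 0)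
        - (if z = x then (1:ℤ) else 0) * (if z = nxt y then 1 else 0)
        - ((if z = nxt x then (1:ℤ) else 0) * (if z = y then 1 else 0)
        - (if z = nxt x then (1:ℤ) else 0) * (if z = nxt y then 1 else 0)) := by
      intro z; rw [hf, hf]; ring
    rw [Fintype.sum_sum_type]
    have h1 : ∑ u : Unit, f x (Sum.inl u) * f y (Sum.inl u) = 1 := by simp [f]
    rw [h1, Finset.sum_congr rfl (fun z _ => h2 z), Finset.sum_sub_distrib,
      Finset.sum_sub_distrib, Finset.sum_sub_distrib, kronSum, kronSum, kronSum, kronSum]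
    have hxy : (if x = y then (1:ℤ) else 0) = (if y = x then 1 else 0) := by
      simp [eq_comm]
    have hxny : (if x = nxt y then (1:ℤ) else 0) = (if nxt y = x then 1 else 0) := by
      simp [eq_comm]
    have hnxy : (if nxt x = y then (1:ℤ) else 0) = (if y = nxt x then 1 else 0) := by
      simp [eq_comm]
    have hnxny : (if nxt x = nxt y then (1:ℤ) else 0) = (if nxt y = nxt x then 1 else 0) := by
      simp [eq_comm]
    rw [hxy, hxny, hnxy, hnxny]; ring
  have part1 : ∀ x, ∑ j, f x j * f x j = 3 := by
    intro x
    rw [key x x, if_pos rfl, if_pos rfl, if_neg (Ne.symm (hne x)), if_neg (hne x)]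
    ring
  have part2 : ∀ x y, G.Adj x y → ∑ j, f x j * f y j = 1 := by
    intro x y h
    obtain ⟨hxy, hnc⟩ := (hG x y).1 h
    have hnxy : nxt x ≠ y := by
      intro h'
      exact hnc ⟨by rw [← h', (hnxt x).1], Or.inl ((hnxt x).2.symm.trans
        (congrArg (fun z : (Σ i : Fin m, Fin (ℓ i)) => (z.2 : ℕ)) h'))⟩
    have hxny : x ≠ nxt y := by
      intro h'
      exact hnc ⟨by rw [h', (hnxt y).1], Or.inr ((hnxt y).2.symm.trans
        (congrArg (fun z : (Σ i : Fin m, Fin (ℓ i)) => (z.2 : ℕ)) h'.symm))⟩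
    have hnn : nxt x ≠ nxt y := fun h' => hxy (hinj x y h')
    rw [key x y, if_neg hxy, if_neg hxny, if_neg hnxy, if_neg hnn]
    ring
  have part3 : ∀ x y, x ≠ y → ¬ G.Adj x y → ∑ j, f x j * f y j = 0 := by
    intro x y hxy hnadj
    have hC : x.1 = y.1 ∧ (((x.2 : ℕ) + 1) % ℓ x.1 = (y.2 : ℕ) ∨
        ((y.2 : ℕ) + 1) % ℓ y.1 = (x.2 : ℕ)) := by
      by_contra hc
      exact hnadj ((hG x y).2 ⟨hxy, hc⟩)
    obtain ⟨h1, hC⟩ := hC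
    have hnn : nxt x ≠ nxt y := fun h' => hxy (hinj x y h')
    have hx3 : (x.2 : ℕ) < ℓ x.1 := x.2.isLt
    have hy3 : (y.2 : ℕ) < ℓ y.1 := y.2.isLt
    have hL := hℓ x.1
    have hLeq : ℓ x.1 = ℓ y.1 := congrArg ℓ h1
    rcases hC with h | h
    · have hnxy : nxt x = y := sigma_eq _ _ ((hnxt x).1.trans h1) ((hnxt x).2.trans h)
      have hxny : x ≠ nxt y := by
        intro h'
        have h2 := congrArg (fun z : (Σ i : Fin m, Fin (ℓ i)) => (z.2 : ℕ)) h'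
        rw [(hnxt y).2] at h2
        rcases succ_mod_eq hx3 with h5 | ⟨h5, h6⟩ <;>
          rcases succ_mod_eq hy3 with h7 | ⟨h7, h8⟩ <;> omega
      rw [key x y, if_neg hxy, if_neg hxny, if_pos hnxy, if_neg hnn]
      ring
    · have hxny : x = nxt y := (sigma_eq _ _ ((hnxt y).1.trans h1.symm) ((hnxt y).2.trans h)).symm
      have hnxy : nxt x ≠ y := by
        intro h'
        have h2 := congrArg (fun z : (Σ i : Fin m, Fin (ℓ i)) => (z.2 : ℕ)) h'
        rw [(hnxt x).2] at h2
        rcases succ_mod_eq hx3 with h5 | ⟨h5, h6⟩ <;>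
          rcases succ_mod_eq hy3 with h7 | ⟨h7, h8⟩ <;> omega
      rw [key x y, if_neg hxy, if_pos hxny, if_neg hnxy, if_neg hnn]
      ring
  refine ⟨part1, part2, part3, ?_⟩
  -- eigenvalue bound
  haveI : Nonempty (Σ i : Fin m, Fin (ℓ i)) :=
    ⟨⟨⟨0, hm⟩, ⟨0, by have := hℓ ⟨0, hm⟩; omega⟩⟩⟩
  unfold minEig
  letI := Classical.decRel G.Adj
  refine le_ciInf fun i => ?_
  set hA := adjMatrix_isHermitian G with hAdef
  let B : Matrix (Unit ⊕ Σ i : Fin m, Fin (ℓ i)) (Σ i : Fin m, Fin (ℓ i)) ℝ :=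
    Matrix.of fun j x => ((f x j : ℤ) : ℝ)
  have hPSD := Matrix.posSemidef_conjTranspose_mul_self B
  have hM : Bᴴ * B = G.adjMatrix ℝ + (3 : ℝ) • (1 : Matrix _ _ ℝ) := by
    ext x y
    have hxy : (Bᴴ * B) x y = ((∑ j, f x j * f y j : ℤ) : ℝ) := by
      simp [Matrix.mul_apply, Matrix.conjTranspose_apply, B]
    rw [Matrix.add_apply, Matrix.smul_apply, smul_eq_mul]
    by_cases h1 : x = y
    · subst h1
      rw [hxy, part1 x, Matrix.one_apply_eq]
      simp
    · by_cases h2 : G.Adj x y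
      · rw [hxy, part2 x y h2, Matrix.one_apply_ne h1]
        simp [h2]
      · rw [hxy, part3 x y h1 h2, Matrix.one_apply_ne h1]
        simp [h2]
  have hv := hA.mulVec_eigenvectorBasis i
  set v : (Σ i : Fin m, Fin (ℓ i)) → ℝ := ⇑(hA.eigenvectorBasis i) with hvdef
  have hnorm : ‖hA.eigenvectorBasis i‖ = 1 := (hA.eigenvectorBasis).orthonormal.1 i
  have hvv : star v ⬝ᵥ v = 1 := by
    have h := real_inner_self_eq_norm_sq (hA.eigenvectorBasis i)
    rw [hnorm] at h
    simp only [PiLp.inner_apply, RCLike.inner_apply, starRingEnd_apply, one_pow] at h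
    simpa [dotProduct, star, mul_comm, hvdef] using h
  have h0 := hPSD.dotProduct_mulVec_nonneg v
  rw [hM] at h0
  have hmv : (G.adjMatrix ℝ + (3 : ℝ) • (1 : Matrix _ _ ℝ)) *ᵥ v = (hA.eigenvalues i + 3) • v := by
    rw [Matrix.add_mulVec, Matrix.smul_mulVec, Matrix.one_mulVec, hv, ← add_smul]
  rw [hmv, dotProduct_smul, hvv] at h0
  simp only [smul_eq_mul, mul_one] at h0
  linarith
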